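/- arXiv:1709.04633 — 3 statements merged into one kernel-verified Lean document; each statement's English description precedes it below -/
import Mathlib

section
/- Let Γ be a group containing a normal subgroup N isomorphic (as a group) to ℤ^n, such that N has finite index in Γ and the quotient group G = Γ/N acts on N by conjugation (this action is well defined since N is abelian). Then the first Betti number of Γ, i.e. the rank of the finitely generated abelian group Γ/[Γ,Γ], equals the rank of the subgroup of G-invariants N^G = {z ∈ N : g·z = z for all g ∈ G}, where g·z = ḡ z ḡ⁻¹ for any lift ḡ ∈ Γ of g. -/
open scoped TensorProduct

/-- The rank (first Betti number source) of a group: the dimension over `ℚ` of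
`(Γ/[Γ,Γ]) ⊗_ℤ ℚ`, i.e. the rank of the finitely generated abelian group `Γ/[Γ,Γ]`. -/
noncomputable def firstBettiNumber (Γ : Type*) [Group Γ] : ℕ :=
  Module.finrank ℚ (ℚ ⊗[ℤ] Additive (Abelianization Γ))

/-- If `N ≅ ℤⁿ` is a normal subgroup of finite index in `Γ`, then the first Betti
number of `Γ` equals the rank of the subgroup of invariants `N^G` of the conjugation
action of `G = Γ/N` on `N`.  Since `N` is abelian, an element `z ∈ N` is `G`-invariant
iff `γ * z * γ⁻¹ = z` for every `γ ∈ Γ`, so `N^G` is described by the subgroup `NG`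
below (which is abelian, hence its rank is the rank of its abelianization). -/
theorem firstBetti_eq_rank_invariants (n : ℕ) (Γ : Type*) [Group Γ]
    (N : Subgroup Γ) [N.Normal] (hfin : N.FiniteIndex)
    (hiso : Nonempty (N ≃* Multiplicative (Fin n → ℤ)))
    (NG : Subgroup Γ)
    (hNG : ∀ z : Γ, z ∈ NG ↔ z ∈ N ∧ ∀ γ : Γ, γ * z * γ⁻¹ = z) :
    firstBettiNumber Γ = firstBettiNumber NG := by
  classical
  obtain ⟨e⟩ := hiso
  haveI := hfin
  letI := N.fintypeQuotientOfFiniteIndex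
  -- N is commutative
  have hNcomm : ∀ a b : N, a * b = b * a := fun a b =>
    e.injective (by rw [map_mul, map_mul, mul_comm])
  letI : CommGroup ↥N := { (inferInstance : Group ↥N) with mul_comm := hNcomm }
  letI : CommGroup ↥NG :=
    { (inferInstance : Group ↥NG) with
      mul_comm := fun a b => Subtype.ext (by
        have := ((hNG b).mp b.2).2 a
        have h2 := congrArg (· * (a : Γ)) this
        simp only [mul_assoc, inv_mul_cancel, mul_one] at h2
        exact h2) }
  set m := N.index with hm
  have hm0 : (m : ℚ) ≠ 0 := Nat.cast_ne_zero.mpr hfin.index_ne_zero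
  have hcard : Fintype.card (Γ ⧸ N) = m := by
    rw [hm, Subgroup.index_eq_card, Nat.card_eq_fintype_card]
  have comm : ∀ w v : Γ, w ∈ N → v ∈ N → w * v = v * w := fun w v hw hv =>
    congrArg Subtype.val (hNcomm ⟨w, hw⟩ ⟨v, hv⟩)
  have conjmem : ∀ (γ : Γ) (z : ↥N), γ * ↑z * γ⁻¹ ∈ N := fun γ z =>
    Subgroup.Normal.conj_mem ‹N.Normal› _ z.2 γ
  set a : ↥N → (Γ ⧸ N) → ↥N := fun z q => ⟨q.out * ↑z * q.out⁻¹, conjmem _ z⟩ with ha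
  set P : ↥N → ↥N := fun z => ∏ q : Γ ⧸ N, a z q with hP
  -- conjugation invariance of the value of P
  have keyconj : ∀ (z : ↥N) (t u : Γ), t⁻¹ * u ∈ N → t * ↑z * t⁻¹ = u * ↑z * u⁻¹ := by
    intro z t u hn
    have hcz : (↑z : Γ) * (t⁻¹ * u) = (t⁻¹ * u) * ↑z := comm _ _ z.2 hn
    have h := congrArg (fun x : Γ => t * x * u⁻¹) hcz
    simp only [mul_assoc, inv_mul_cancel_left, mul_inv_cancel, mul_one] at h
    simpa [mul_assoc] using h
  have hPconj : ∀ (γ : Γ) (z : ↥N), γ * ↑(P z) * γ⁻¹ = ↑(P z) := by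
    intro γ z
    let c : ↥N →* ↥N :=
      { toFun := fun w => ⟨γ * ↑w * γ⁻¹, conjmem γ w⟩
        map_one' := by ext; simp
        map_mul' := fun w v => by
          ext
          show γ * (↑w * ↑v) * γ⁻¹ = (γ * ↑w * γ⁻¹) * (γ * ↑v * γ⁻¹)
          group }
    have step : ∀ q : Γ ⧸ N, c (a z q) = a z (γ • q) := by
      intro q
      ext
      show γ * (q.out * ↑z * q.out⁻¹) * γ⁻¹ = (γ • q).out * ↑z * (γ • q).out⁻¹
      have hmem : ((γ • q).out)⁻¹ * (γ * q.out) ∈ N := by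
        apply QuotientGroup.eq.mp
        rw [QuotientGroup.out_eq']
        exact (MulAction.Quotient.mk_smul_out N γ q).symm
      have := keyconj z ((γ • q).out) (γ * q.out) hmem
      rw [this]; group
    have : c (P z) = P z := by
      rw [hP]
      rw [map_prod]
      calc (∏ q : Γ ⧸ N, c (a z q)) = ∏ q : Γ ⧸ N, a z (γ • q) := by
            exact Finset.prod_congr rfl (fun q _ => step q)
        _ = ∏ q : Γ ⧸ N, a z q :=
            Fintype.prod_equiv (MulAction.toPerm γ) (fun q => a z (γ • q)) (a z)
              (fun q => rfl)
    exact congrArg Subtype.val this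
  have hPmem : ∀ z : ↥N, (↑(P z) : Γ) ∈ NG := fun z =>
    (hNG _).mpr ⟨(P z).2, fun γ => hPconj γ z⟩
  -- the norm homomorphism S : N →* NG
  let S : ↥N →* ↥NG :=
    { toFun := fun z => ⟨↑(P z), hPmem z⟩
      map_one' := by
        ext
        show (↑(P 1) : Γ) = 1
        have : P 1 = 1 := by
          rw [hP]
          apply Finset.prod_eq_one
          intro q _
          ext
          show q.out * ↑(1 : ↥N) * q.out⁻¹ = 1
          simp
        rw [this]; rfl
      map_mul' := fun z w => by
        ext
        show (↑(P (z * w)) : Γ) = ↑(P z) * ↑(P w)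
        have : P (z * w) = P z * P w := by
          rw [hP, ← Finset.prod_mul_distrib]
          apply Finset.prod_congr rfl
          intro q _
          ext
          show q.out * (↑z * ↑w) * q.out⁻¹ = (q.out * ↑z * q.out⁻¹) * (q.out * ↑w * q.out⁻¹)
          group
        rw [this]; rfl }
  -- NG is central
  have hcen : ∀ z : ↥NG, (↑z : Γ) ∈ Subgroup.center Γ := by
    intro z
    rw [Subgroup.mem_center_iff]
    intro g
    have h1 := ((hNG ↑z).mp z.2).2 g
    have h2 := congrArg (· * g) h1
    simp only [mul_assoc, inv_mul_cancel, mul_one] at h2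
    exact h2
  -- the transfer homomorphism and its value on NG
  have hT : ∀ z : ↥NG, S.transfer ↑z = z ^ (m * m) := by
    intro z
    have hzN : (↑z : Γ) ∈ N := ((hNG ↑z).mp z.2).1
    have key0 : ∀ (k : ℕ) (g₀ : Γ), g₀⁻¹ * (↑z : Γ) ^ k * g₀ ∈ N →
        g₀⁻¹ * (↑z : Γ) ^ k * g₀ = (↑z : Γ) ^ k := by
      intro k g₀ _
      have hp : ((↑z : Γ) ^ k) ∈ Subgroup.center Γ := pow_mem (hcen z) k
      rw [Subgroup.mem_center_iff] at hp
      rw [mul_assoc, ← hp g₀, ← mul_assoc, inv_mul_cancel, one_mul]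
    rw [MonoidHom.transfer_eq_pow S (↑z : Γ) key0]
    -- compute S on the central element z ^ m
    ext
    show (↑(P ⟨(↑z : Γ) ^ N.index, _⟩) : Γ) = ↑(z ^ (m * m))
    have hzm : ((↑z : Γ) ^ m) ∈ Subgroup.center Γ := pow_mem (hcen z) m
    rw [Subgroup.mem_center_iff] at hzm
    have hterm : ∀ q : Γ ⧸ N, a ⟨(↑z : Γ) ^ N.index, MonoidHom.transfer_eq_pow_aux _ key0⟩ q
        = ⟨(↑z : Γ) ^ m, MonoidHom.transfer_eq_pow_aux _ key0⟩ := by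
      intro q
      ext
      show q.out * (↑z : Γ) ^ m * q.out⁻¹ = (↑z : Γ) ^ m
      rw [hzm q.out, mul_assoc, mul_inv_cancel, mul_one]
    have : P ⟨(↑z : Γ) ^ N.index, MonoidHom.transfer_eq_pow_aux _ key0⟩
        = ⟨(↑z : Γ) ^ m, MonoidHom.transfer_eq_pow_aux _ key0⟩ ^ m := by
      rw [hP]
      simp only
      rw [Finset.prod_congr rfl (fun q _ => hterm q), Finset.prod_const, Finset.card_univ, hcard]
    rw [this]
    push_cast
    rw [← pow_mul]
  -- abelianization homomorphisms
  let f₀ : Abelianization ↥NG →* Abelianization Γ := Abelianization.map NG.subtype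
  let k₀ : Abelianization Γ →* Abelianization ↥NG :=
    Abelianization.lift (Abelianization.of.comp S.transfer)
  have key1 : ∀ x : Abelianization ↥NG, k₀ (f₀ x) = x ^ (m * m) := by
    have heq : k₀.comp f₀ = powMonoidHom (m * m) := by
      refine Abelianization.hom_ext _ _ ?_
      ext z
      show k₀ (f₀ (Abelianization.of z)) = (Abelianization.of z) ^ (m * m)
      have h1 : f₀ (Abelianization.of z) = Abelianization.of (↑z : Γ) :=
        Abelianization.map_of _ _
      rw [h1]
      have h2 : k₀ (Abelianization.of (↑z : Γ)) = Abelianization.of (S.transfer ↑z) :=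
        Abelianization.lift_apply_of _ _
      rw [h2, hT z, map_pow]
    intro x
    exact DFunLike.congr_fun heq x
  have key2 : ∀ γ : Γ,
      f₀ (Abelianization.of (S ⟨γ ^ m, N.pow_index_mem γ⟩)) = (Abelianization.of γ) ^ (m * m) := by
    intro γ
    set nn : ↥N := ⟨γ ^ m, N.pow_index_mem γ⟩ with hnn
    have h1 : f₀ (Abelianization.of (S nn)) = Abelianization.of (↑(S nn) : Γ) :=
      Abelianization.map_of _ _
    rw [h1]
    let φ : ↥N →* Abelianization Γ := Abelianization.of.comp N.subtype
    have h2 : Abelianization.of (↑(S nn) : Γ) = φ (P nn) := rfl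
    rw [h2, hP, map_prod]
    have h3 : ∀ q : Γ ⧸ N, φ (a nn q) = (Abelianization.of γ) ^ m := by
      intro q
      show Abelianization.of (q.out * ↑nn * q.out⁻¹) = _
      rw [hnn]
      rw [map_mul, map_mul, map_inv, map_pow, mul_right_comm, mul_inv_cancel, one_mul]
    rw [Finset.prod_congr rfl (fun q _ => h3 q), Finset.prod_const, Finset.card_univ, hcard,
      ← pow_mul]
  -- additive / linear versions
  let fA := MonoidHom.toAdditive f₀
  let kA := MonoidHom.toAdditive k₀
  let F : ℚ ⊗[ℤ] Additive (Abelianization ↥NG) →ₗ[ℚ] ℚ ⊗[ℤ] Additive (Abelianization Γ) :=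
    LinearMap.baseChange ℚ fA.toIntLinearMap
  let K : ℚ ⊗[ℤ] Additive (Abelianization Γ) →ₗ[ℚ] ℚ ⊗[ℤ] Additive (Abelianization ↥NG) :=
    LinearMap.baseChange ℚ kA.toIntLinearMap
  have hKF : ∀ x, K (F x) = ((m * m : ℕ) : ℚ) • x := by
    intro x
    induction x using TensorProduct.induction_on with
    | zero => simp
    | tmul q b =>
      have h1 : F (q ⊗ₜ b) = q ⊗ₜ (fA b) := LinearMap.baseChange_tmul _ _ _
      have h2 : K (q ⊗ₜ (fA b)) = q ⊗ₜ (kA (fA b)) := LinearMap.baseChange_tmul _ _ _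
      have h3 : kA (fA b) = (m * m) • b := by
        show Additive.ofMul (k₀ (f₀ b.toMul)) = (m * m) • b
        rw [key1, ofMul_pow]
        rfl
      rw [h1, h2, h3, TensorProduct.tmul_smul, Nat.cast_smul_eq_nsmul]
    | add x y hx hy => rw [map_add, map_add, hx, hy, smul_add]
  have hmm2 : ((m * m : ℕ) : ℚ) ≠ 0 :=
    Nat.cast_ne_zero.mpr (Nat.mul_ne_zero hfin.index_ne_zero hfin.index_ne_zero)
  have hinj : Function.Injective F := by
    intro x y hxy
    have h1 : ((m * m : ℕ) : ℚ) • x = ((m * m : ℕ) : ℚ) • y := by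
      rw [← hKF, ← hKF, hxy]
    exact smul_right_injective _ hmm2 h1
  have hofsur : Function.Surjective (Abelianization.of (G := Γ)) := fun ab =>
    Quot.exists_rep ab
  have hsurj : ∀ y : ℚ ⊗[ℤ] Additive (Abelianization Γ), y ∈ LinearMap.range F := by
    intro y
    induction y using TensorProduct.induction_on with
    | zero => exact Submodule.zero_mem _
    | add x y hx hy => exact Submodule.add_mem _ hx hy
    | tmul q ab =>
      obtain ⟨γ, hγ⟩ := hofsur ab.toMul
      refine ⟨(((m * m : ℕ) : ℚ)⁻¹ • q) ⊗ₜ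
        Additive.ofMul (Abelianization.of (S ⟨γ ^ m, N.pow_index_mem γ⟩)), ?_⟩
      have h1 : F ((((m * m : ℕ) : ℚ)⁻¹ • q) ⊗ₜ
          Additive.ofMul (Abelianization.of (S ⟨γ ^ m, N.pow_index_mem γ⟩)))
          = (((m * m : ℕ) : ℚ)⁻¹ • q) ⊗ₜ (fA (Additive.ofMul (Abelianization.of
          (S ⟨γ ^ m, N.pow_index_mem γ⟩)))) := LinearMap.baseChange_tmul _ _ _
      rw [h1]
      have h2 : fA (Additive.ofMul (Abelianization.of (S ⟨γ ^ m, N.pow_index_mem γ⟩)))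
          = (m * m) • ab := by
        show Additive.ofMul (f₀ (Abelianization.of (S ⟨γ ^ m, N.pow_index_mem γ⟩))) = _
        rw [key2, hγ, ofMul_pow]
        rfl
      rw [h2, TensorProduct.tmul_smul, ← Nat.cast_smul_eq_nsmul ℚ,
        TensorProduct.smul_tmul', smul_smul, mul_inv_cancel₀ hmm2, one_smul]
  have hsur : Function.Surjective F := fun y => LinearMap.mem_range.mp (hsurj y)
  let E := LinearEquiv.ofBijective F ⟨hinj, hsur⟩
  show Module.finrank ℚ (ℚ ⊗[ℤ] Additive (Abelianization Γ))
    = Module.finrank ℚ (ℚ ⊗[ℤ] Additive (Abelianization ↥NG))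
  exact (LinearEquiv.finrank_eq E).symm
end

section
/- Let N be a nilpotent group. Then the set √[N,N] = {n ∈ N : n^k ∈ [N,N] for some integer k ≥ 1} is a subgroup of N; moreover, if N is a normal subgroup of a group E, then √[N,N] is a normal subgroup of E. -/
section Aux

variable {G : Type*} [Group G]

lemma aux_mem_comm_iff (x : G) (k : ℕ) :
    x ^ k ∈ commutator G ↔ (Abelianization.of x) ^ k = 1 := by
  rw [← map_pow]
  exact (QuotientGroup.eq_one_iff (x ^ k)).symm

/-- The isolator of the commutator subgroup, as a subgroup. -/
def isolatorComm (G : Type*) [Group G] : Subgroup G :=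
  (CommGroup.torsion (Abelianization G)).comap Abelianization.of

lemma mem_isolatorComm_iff (x : G) :
    x ∈ isolatorComm G ↔ ∃ k : ℕ, 1 ≤ k ∧ x ^ k ∈ commutator G := by
  constructor
  · intro hx
    obtain ⟨k, hk, hk1⟩ := isOfFinOrder_iff_pow_eq_one.mp hx
    exact ⟨k, hk, (aux_mem_comm_iff x k).mpr hk1⟩
  · rintro ⟨k, hk, hxk⟩
    exact isOfFinOrder_iff_pow_eq_one.mpr ⟨k, hk, (aux_mem_comm_iff x k).mp hxk⟩

end Aux

/-- For a nilpotent normal subgroup `N` of a group `E`, the isolator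
`√[N,N] = {n ∈ N : nᵏ ∈ [N,N] for some k ≥ 1}` is a subgroup of `N`, and it is
the underlying set of a normal subgroup of `E`. -/
theorem isolator_is_subgroup_and_normal (E : Type*) [Group E]
    (N : Subgroup E) [N.Normal] (hnil : Group.IsNilpotent N) :
    (∃ H : Subgroup N, ∀ x : N, x ∈ H ↔ ∃ k : ℕ, 1 ≤ k ∧ x ^ k ∈ commutator N) ∧
    (∃ K : Subgroup E, K.Normal ∧
      ∀ x : E, x ∈ K ↔ x ∈ N ∧ ∃ k : ℕ, 1 ≤ k ∧
        x ^ k ∈ (commutator N).map N.subtype) := by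
  refine ⟨⟨isolatorComm N, mem_isolatorComm_iff⟩, ?_⟩
  -- the map of the commutator subgroup to E
  have hCnormal : ((commutator N).map N.subtype).Normal := by
    rw [commutator_def, Subgroup.map_commutator, ← MonoidHom.range_eq_map, Subgroup.range_subtype]
    infer_instance
  refine ⟨(isolatorComm N).map N.subtype, ?_, ?_⟩
  · constructor
    intro x hx g
    obtain ⟨y, hy, rfl⟩ := hx
    obtain ⟨k, hk, hyk⟩ := (mem_isolatorComm_iff y).mp hy
    have hgyN : g * (y : E) * g⁻¹ ∈ N := ‹N.Normal›.conj_mem y y.2 g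
    refine ⟨⟨g * (y : E) * g⁻¹, hgyN⟩, (mem_isolatorComm_iff _).mpr ⟨k, hk, ?_⟩, rfl⟩
    -- need: ⟨g y g⁻¹⟩ ^ k ∈ commutator N
    have hykE : ((y : E)) ^ k ∈ (commutator N).map N.subtype :=
      ⟨y ^ k, hyk, by simp⟩
    have hconj : g * ((y : E)) ^ k * g⁻¹ ∈ (commutator N).map N.subtype :=
      hCnormal.conj_mem _ hykE g
    obtain ⟨c, hc, hceq⟩ := hconj
    have : (⟨g * (y : E) * g⁻¹, hgyN⟩ : N) ^ k = c := by
      rw [Subgroup.coe_subtype] at hceq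
      apply Subtype.ext
      push_cast
      rw [hceq, conj_pow]
    rw [this]
    exact hc
  · intro x
    constructor
    · rintro ⟨y, hy, rfl⟩
      obtain ⟨k, hk, hyk⟩ := (mem_isolatorComm_iff y).mp hy
      exact ⟨y.2, k, hk, ⟨y ^ k, hyk, by simp⟩⟩
    · rintro ⟨hxN, k, hk, hxk⟩
      obtain ⟨c, hc, hceq⟩ := hxk
      refine ⟨⟨x, hxN⟩, (mem_isolatorComm_iff _).mpr ⟨k, hk, ?_⟩, rfl⟩
      have : (⟨x, hxN⟩ : N) ^ k = c := by
        rw [Subgroup.coe_subtype] at hceq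
        apply Subtype.ext
        push_cast
        rw [hceq]
      rw [this]
      exact hc
end

section
/- Let E be a finitely generated group with a normal nilpotent subgroup N of finite index, and suppose the set K = √[N,N] = {n ∈ N : n^k ∈ [N,N] for some integer k ≥ 1} is a normal subgroup of E. Let Q = E/K. Then the first Betti number of E equals the first Betti number of Q, i.e. the abelianizations E/[E,E] and Q/[Q,Q] have the same rank. -/
open scoped TensorProduct

instance : Module.Flat ℤ ℚ := IsLocalization.flat ℚ (nonZeroDivisors ℤ)

/-- `ℚ ⊗ T = 0` for a torsion abelian group `T`. -/
lemma tensor_eq_zero_of_torsion {M : Type*} [AddCommGroup M]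
    (h : ∀ m : M, ∃ n : ℕ, 0 < n ∧ (n : ℤ) • m = 0) (x : ℚ ⊗[ℤ] M) : x = 0 := by
  induction x using TensorProduct.induction_on with
  | zero => rfl
  | tmul q m =>
    obtain ⟨n, hn, hnm⟩ := h m
    have hq : q = (n : ℤ) • ((n : ℚ)⁻¹ * q) := by
      have hne : (n : ℚ) ≠ 0 := by exact_mod_cast hn.ne'
      rw [zsmul_eq_mul]
      push_cast
      field_simp
    calc q ⊗ₜ[ℤ] m = ((n : ℤ) • ((n : ℚ)⁻¹ * q)) ⊗ₜ[ℤ] m := by rw [← hq]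
      _ = ((n : ℚ)⁻¹ * q) ⊗ₜ[ℤ] ((n : ℤ) • m) := TensorProduct.smul_tmul _ _ _
      _ = 0 := by rw [hnm, TensorProduct.tmul_zero]
  | add x y hx hy => rw [hx, hy, add_zero]

/-- Let `E` be a finitely generated group with a normal nilpotent subgroup `N` of
finite index, and suppose `K = √[N,N] = {n ∈ N : nᵏ ∈ [N,N] for some k ≥ 1}` is a
normal subgroup of `E`.  Then `E` and `Q = E/K` have the same first Betti number. -/
theorem firstBetti_eq_firstBetti_of_quotient_by_isolator
    (E : Type*) [Group E] [Group.FG E]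
    (N : Subgroup E) [N.Normal] (hnil : Group.IsNilpotent N) (hfin : N.FiniteIndex)
    (K : Subgroup E) [K.Normal]
    (hK : ∀ x : E, x ∈ K ↔ x ∈ N ∧ ∃ k : ℕ, 1 ≤ k ∧
      x ^ k ∈ (commutator N).map N.subtype) :
    firstBettiNumber E = firstBettiNumber (E ⧸ K) := by
  classical
  -- the induced map on abelianizations
  set φ : Abelianization E →* Abelianization (E ⧸ K) :=
    Abelianization.map (QuotientGroup.mk' K) with hφ
  -- `of` is surjective
  have hofE : Function.Surjective (Abelianization.of : E → Abelianization E) :=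
    fun y => Quotient.inductionOn' y fun g => ⟨g, rfl⟩
  have hofQ : Function.Surjective (Abelianization.of : E ⧸ K → Abelianization (E ⧸ K)) :=
    fun y => Quotient.inductionOn' y fun g => ⟨g, rfl⟩
  -- φ is surjective
  have hsurj : Function.Surjective φ := by
    intro y
    obtain ⟨q, rfl⟩ := hofQ y
    obtain ⟨e, rfl⟩ := QuotientGroup.mk'_surjective K q
    exact ⟨Abelianization.of e, Abelianization.map_of _ _⟩
  -- membership in commutator subgroup ⟺ trivial image in abelianization
  have hker : ∀ (G : Type _) [Group G], ∀ g : G,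
      (Abelianization.of g = 1) ↔ g ∈ commutator G := by
    intro G _ g
    exact QuotientGroup.eq_one_iff g
  -- `[N,N]` maps into `[E,E]`
  have hNNle : (commutator N).map N.subtype ≤ commutator E := by
    rw [commutator_def, commutator_def, Subgroup.map_commutator]
    exact Subgroup.commutator_mono le_top le_top
  -- commutator of the quotient is the image of the commutator
  have hcomm : commutator (E ⧸ K) = (commutator E).map (QuotientGroup.mk' K) := by
    rw [commutator_def, commutator_def, Subgroup.map_commutator,
      Subgroup.map_top_of_surjective _ (QuotientGroup.mk'_surjective K)]
  -- kernel of φ is torsion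
  have htors : ∀ a : Abelianization E, φ a = 1 → ∃ n : ℕ, 0 < n ∧ a ^ n = 1 := by
    intro a ha
    obtain ⟨e, rfl⟩ := hofE a
    rw [hφ, Abelianization.map_of] at ha
    rw [hker] at ha
    rw [hcomm] at ha
    obtain ⟨c, hc, hce⟩ := ha
    -- `c⁻¹ * e ∈ K`
    have hkmem : c⁻¹ * e ∈ K := by
      have : (QuotientGroup.mk' K) (c⁻¹ * e) = 1 := by
        rw [map_mul, map_inv, hce, inv_mul_cancel]
      exact (QuotientGroup.ker_mk' K) ▸ this
    set k : E := c⁻¹ * e with hk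
    obtain ⟨-, m, hm1, hm⟩ := (hK k).mp hkmem
    refine ⟨m, hm1, ?_⟩
    have he : e = c * k := by rw [hk]; group
    have hofc : Abelianization.of c = 1 := (hker E c).mpr hc
    have hofkm : (Abelianization.of k) ^ m = 1 := by
      rw [← map_pow, hker]
      exact hNNle hm
    calc (Abelianization.of e) ^ m = (Abelianization.of c * Abelianization.of k) ^ m := by
          rw [← map_mul, ← he]
      _ = (Abelianization.of k) ^ m := by rw [hofc, one_mul]
      _ = 1 := hofkm
  -- pass to additive / ℤ-linear setting
  set ℓ : Additive (Abelianization E) →ₗ[ℤ] Additive (Abelianization (E ⧸ K)) :=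
    (MonoidHom.toAdditive φ).toIntLinearMap with hℓ
  have hℓsurj : Function.Surjective ℓ := hsurj
  have hℓtors : ∀ a ∈ LinearMap.ker ℓ, ∃ n : ℕ, 0 < n ∧ (n : ℤ) • a = 0 := by
    intro a ha
    obtain ⟨n, hn, h1⟩ := htors a.toMul ha
    refine ⟨n, hn, ?_⟩
    have h2 := ofMul_zpow (n : ℤ) (Additive.toMul a)
    rw [zpow_natCast, h1] at h2
    simpa using h2.symm
  -- tensoring with ℚ
  have hexact : Function.Exact ((LinearMap.ker ℓ).subtype.lTensor ℚ) (ℓ.lTensor ℚ) :=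
    Module.Flat.lTensor_exact ℚ (LinearMap.exact_subtype_ker_map ℓ)
  have hinj : Function.Injective (ℓ.lTensor ℚ) := by
    rw [injective_iff_map_eq_zero]
    intro x hx
    obtain ⟨y, rfl⟩ := (hexact x).mp hx
    have : y = 0 := tensor_eq_zero_of_torsion
      (fun m => by
        obtain ⟨n, hn, h⟩ := hℓtors m.1 m.2
        exact ⟨n, hn, Subtype.ext (by simpa using h)⟩) y
    rw [this, map_zero]
  have hsurj' : Function.Surjective (ℓ.lTensor ℚ) := LinearMap.lTensor_surjective ℚ hℓsurj
  -- base change agrees with lTensor, giving a ℚ-linear equivalence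
  have hbc : ∀ x, ℓ.baseChange ℚ x = ℓ.lTensor ℚ x := by
    intro x
    rw [LinearMap.baseChange_eq_ltensor]
  have hbij : Function.Bijective (ℓ.baseChange ℚ) := by
    constructor
    · intro x y h; exact hinj (by rw [← hbc, ← hbc, h])
    · intro y; obtain ⟨x, hx⟩ := hsurj' y; exact ⟨x, by rw [hbc, hx]⟩
  exact LinearEquiv.finrank_eq (LinearEquiv.ofBijective (ℓ.baseChange ℚ) hbij)
end
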